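/- For every s ∈ (0,1), the change of variables t = u/s gives ∫₀^s (u·(s−u)·(1−u))^{−1/2} du = ∫₀¹ (t·(1−t)·(1−s·t))^{−1/2} dt. Moreover there exists a constant C ∈ (0,∞) such that for all s ∈ (0,1/2], π ≤ ∫₀^s (u·(s−u)·(1−u))^{−1/2} du ≤ π + C·s; in particular lim_{s→0⁺} ∫₀^s (u·(s−u)·(1−u))^{−1/2} du = π. -/

import Mathlib

open MeasureTheory


lemma beta_half : Complex.betaIntegral (1/2) (1/2) = (Real.pi : ℂ) := by
  have h := Complex.Gamma_mul_Gamma_eq_betaIntegral (s := 1/2) (t := 1/2) (by norm_num) (by norm_num)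
  rw [Complex.Gamma_one_half_eq] at h
  norm_num at h
  rw [← h, ← Complex.cpow_add _ _ (by
    simpa using Real.pi_ne_zero : (Real.pi : ℂ) ≠ 0)]
  norm_num

lemma g0_intervalIntegrable_complex :
    IntervalIntegrable (fun x : ℝ => (x : ℂ) ^ (-(1/2) : ℂ) * ((1:ℂ) - x) ^ (-(1/2) : ℂ)) volume 0 1 := by
  have := Complex.betaIntegral_convergent (u := 1/2) (v := 1/2) (by norm_num) (by norm_num)
  norm_num at this
  exact this

lemma eq_ofReal (x : ℝ) (hx : x ∈ Set.Icc (0:ℝ) 1) :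
    (x : ℂ) ^ (-(1/2) : ℂ) * ((1:ℂ) - x) ^ (-(1/2) : ℂ)
      = ((x ^ (-(1/2):ℝ) * (1 - x) ^ (-(1/2):ℝ) : ℝ) : ℂ) := by
  rw [show (-(1/2):ℂ) = ((-(1/2):ℝ):ℂ) by norm_num,
    ← Complex.ofReal_cpow hx.1,
    show ((1:ℂ) - x) = ((1 - x : ℝ) : ℂ) by push_cast; ring,
    ← Complex.ofReal_cpow (by linarith [hx.2] : (0:ℝ) ≤ 1 - x)]
  push_cast
  ring

lemma g0_integrableOn :
    IntegrableOn (fun x : ℝ => x ^ (-(1/2):ℝ) * (1-x) ^ (-(1/2):ℝ)) (Set.Ioc 0 1) volume := by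
  have h := g0_intervalIntegrable_complex
  rw [intervalIntegrable_iff_integrableOn_Ioc_of_le (by norm_num)] at h
  have h2 : IntegrableOn (fun x : ℝ => ((x ^ (-(1/2):ℝ) * (1-x) ^ (-(1/2):ℝ) : ℝ) : ℂ))
      (Set.Ioc 0 1) volume :=
    h.congr_fun (fun x hx => eq_ofReal x ⟨hx.1.le, hx.2⟩) measurableSet_Ioc
  simpa [IntegrableOn] using h2.re

lemma pi_val' : ∫ x in Set.Ioc (0:ℝ) 1, x ^ (-(1/2):ℝ) * (1-x) ^ (-(1/2):ℝ) = Real.pi := by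
  have hb : (∫ x in (0:ℝ)..1, (x : ℂ) ^ (-(1/2) : ℂ) * ((1:ℂ) - x) ^ (-(1/2) : ℂ)) = (Real.pi : ℂ) := by
    have := beta_half
    rw [Complex.betaIntegral] at this
    norm_num at this
    exact this
  rw [intervalIntegral.integral_congr (g := fun x : ℝ =>
      ((x ^ (-(1/2):ℝ) * (1-x) ^ (-(1/2):ℝ) : ℝ) : ℂ))
      (fun x hx => eq_ofReal x (by simpa using hx))] at hb
  rw [intervalIntegral.integral_ofReal] at hb
  have := Complex.ofReal_injective hb
  rwa [intervalIntegral.integral_of_le (by norm_num)] at this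

lemma hg0_eqOn : Set.EqOn (fun x : ℝ => x ^ (-(1/2):ℝ) * (1-x) ^ (-(1/2):ℝ))
    (fun t : ℝ => (t*(1-t)) ^ (-(1/2):ℝ)) (Set.Ioc 0 1) :=
  fun t ht => (Real.mul_rpow ht.1.le (by linarith [ht.2])).symm

lemma g0_int : IntegrableOn (fun t : ℝ => (t*(1-t)) ^ (-(1/2):ℝ)) (Set.Ioc 0 1) volume :=
  g0_integrableOn.congr_fun hg0_eqOn measurableSet_Ioc

lemma pi_val : ∫ t in Set.Ioc (0:ℝ) 1, (t*(1-t)) ^ (-(1/2):ℝ) = Real.pi := by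
  rw [← setIntegral_congr_fun measurableSet_Ioc hg0_eqOn]
  exact pi_val'

lemma sqrt_ineq {x : ℝ} (h0 : 0 ≤ x) (h1 : x ≤ 1/2) :
    (1 - x) ^ (-(1/2):ℝ) ≤ 1 + x := by
  rw [Real.rpow_neg (by linarith), ← Real.sqrt_eq_rpow]
  have hs : (1:ℝ)/(1+x) ≤ Real.sqrt (1-x) := by
    rw [Real.le_sqrt (by positivity) (by linarith)]
    rw [div_pow, one_pow, div_le_iff₀ (by positivity)]
    nlinarith [sq_nonneg x, sq_nonneg (1+x)]
  calc (Real.sqrt (1-x))⁻¹ ≤ ((1:ℝ)/(1+x))⁻¹ := by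
        apply inv_anti₀ (by positivity) hs
    _ = 1 + x := by field_simp

lemma G_base_nonneg {s t : ℝ} (hs : s ∈ Set.Ioc (0:ℝ) (1/2)) (ht : t ∈ Set.Ioc (0:ℝ) 1) :
    0 ≤ t*(1-t)*(1-s*t) := by
  have : s * t ≤ 1/2 := by nlinarith [hs.1, hs.2, ht.1, ht.2]
  have h1 : 0 ≤ t * (1-t) := mul_nonneg ht.1.le (by linarith [ht.2])
  nlinarith

lemma G_split {s t : ℝ} (hs : s ∈ Set.Ioc (0:ℝ) (1/2)) (ht : t ∈ Set.Ioc (0:ℝ) 1) :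
    (t*(1-t)*(1-s*t)) ^ (-(1/2):ℝ)
      = (t*(1-t)) ^ (-(1/2):ℝ) * (1-s*t) ^ (-(1/2):ℝ) := by
  have : s * t ≤ 1/2 := by nlinarith [hs.1, hs.2, ht.1, ht.2]
  exact Real.mul_rpow (mul_nonneg ht.1.le (by linarith [ht.2])) (by linarith)

lemma G_lower {s t : ℝ} (hs : s ∈ Set.Ioc (0:ℝ) (1/2)) (ht : t ∈ Set.Ioc (0:ℝ) 1) :
    (t*(1-t)) ^ (-(1/2):ℝ) ≤ (t*(1-t)*(1-s*t)) ^ (-(1/2):ℝ) := by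
  have hst : s * t ≤ 1/2 := by nlinarith [hs.1, hs.2, ht.1, ht.2]
  have hst0 : 0 ≤ s * t := mul_nonneg hs.1.le ht.1.le
  rw [G_split hs ht]
  have h1 : 1 ≤ (1-s*t) ^ (-(1/2):ℝ) :=
    Real.one_le_rpow_of_pos_of_le_one_of_nonpos (by linarith) (by linarith) (by norm_num)
  nlinarith [Real.rpow_nonneg (mul_nonneg ht.1.le (by linarith [ht.2] : (0:ℝ) ≤ 1 - t)) (-(1/2):ℝ)]

lemma G_upper {s t : ℝ} (hs : s ∈ Set.Ioc (0:ℝ) (1/2)) (ht : t ∈ Set.Ioc (0:ℝ) 1) :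
    (t*(1-t)*(1-s*t)) ^ (-(1/2):ℝ) ≤ (1+s) * ((t*(1-t)) ^ (-(1/2):ℝ)) := by
  have hst : s * t ≤ 1/2 := by nlinarith [hs.1, hs.2, ht.1, ht.2]
  have hst0 : 0 ≤ s * t := mul_nonneg hs.1.le ht.1.le
  rw [G_split hs ht]
  have h1 : (1-s*t) ^ (-(1/2):ℝ) ≤ 1 + s*t := sqrt_ineq hst0 hst
  have h2 : 1 + s*t ≤ 1 + s := by nlinarith [hs.1, ht.2]
  nlinarith [Real.rpow_nonneg (mul_nonneg ht.1.le (by linarith [ht.2] : (0:ℝ) ≤ 1 - t)) (-(1/2):ℝ)]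

lemma G_int {s : ℝ} (hs : s ∈ Set.Ioc (0:ℝ) (1/2)) :
    IntegrableOn (fun t : ℝ => (t*(1-t)*(1-s*t)) ^ (-(1/2):ℝ)) (Set.Ioc 0 1) volume := by
  apply Integrable.mono' (g0_int.const_mul (1+s))
  · exact (by fun_prop : Measurable (fun t : ℝ => (t*(1-t)*(1-s*t)) ^ (-(1/2):ℝ))).aestronglyMeasurable
  · refine (ae_restrict_iff' measurableSet_Ioc).mpr (Filter.Eventually.of_forall fun t ht => ?_)
    rw [Real.norm_eq_abs, abs_of_nonneg (Real.rpow_nonneg (G_base_nonneg hs ht) _)]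
    exact G_upper hs ht

lemma part1 {s : ℝ} (hs : s ∈ Set.Ioo (0:ℝ) 1) :
    ∫ u in Set.Ioo (0:ℝ) s, (u * (s - u) * (1 - u)) ^ (-(1/2 : ℝ))
      = ∫ t in Set.Ioo (0:ℝ) 1, (t * (1 - t) * (1 - s * t)) ^ (-(1/2 : ℝ)) := by
  obtain ⟨hs0, hs1⟩ := hs
  have hkey := intervalIntegral.smul_integral_comp_mul_left (a := (0:ℝ)) (b := 1)
    (fun u : ℝ => (u * (s - u) * (1 - u)) ^ (-(1/2 : ℝ))) s
  rw [mul_zero, mul_one] at hkey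
  have hL : ∫ u in Set.Ioo (0:ℝ) s, (u * (s - u) * (1 - u)) ^ (-(1/2 : ℝ))
      = ∫ u in (0:ℝ)..s, (u * (s - u) * (1 - u)) ^ (-(1/2 : ℝ)) := by
    rw [intervalIntegral.integral_of_le hs0.le, integral_Ioc_eq_integral_Ioo]
  rw [hL, ← hkey]
  rw [intervalIntegral.integral_of_le zero_le_one, integral_Ioc_eq_integral_Ioo]
  have hcongr : ∀ x ∈ Set.Ioo (0:ℝ) 1,
      (fun u : ℝ => (u * (s - u) * (1 - u)) ^ (-(1/2 : ℝ))) (s * x)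
        = s⁻¹ * ((x * (1 - x) * (1 - s * x)) ^ (-(1/2 : ℝ))) := by
    intro x hx
    have hxs : 0 < 1 - s * x := by nlinarith [hx.1, hx.2]
    have hb : (0:ℝ) ≤ x * (1 - x) * (1 - s * x) :=
      mul_nonneg (mul_nonneg hx.1.le (by linarith [hx.2])) hxs.le
    simp only
    rw [show s * x * (s - s * x) * (1 - s * x) = (s * s) * (x * (1 - x) * (1 - s * x)) by ring,
      Real.mul_rpow (by positivity) hb,
      Real.mul_rpow hs0.le hs0.le, ← Real.rpow_add hs0]
    norm_num [Real.rpow_neg_one]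
  rw [setIntegral_congr_fun measurableSet_Ioo hcongr, integral_const_mul, smul_eq_mul,
    ← mul_assoc, mul_inv_cancel₀ hs0.ne', one_mul]

lemma part2 {s : ℝ} (hs : s ∈ Set.Ioc (0:ℝ) (1/2)) :
    Real.pi ≤ (∫ u in Set.Ioo (0:ℝ) s, (u * (s - u) * (1 - u)) ^ (-(1/2 : ℝ))) ∧
    (∫ u in Set.Ioo (0:ℝ) s, (u * (s - u) * (1 - u)) ^ (-(1/2 : ℝ)))
      ≤ Real.pi + Real.pi * s := by
  have hs' : s ∈ Set.Ioo (0:ℝ) 1 := ⟨hs.1, lt_of_le_of_lt hs.2 (by norm_num)⟩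
  rw [part1 hs', ← integral_Ioc_eq_integral_Ioo]
  constructor
  · calc Real.pi = ∫ t in Set.Ioc (0:ℝ) 1, (t*(1-t)) ^ (-(1/2):ℝ) := pi_val.symm
      _ ≤ _ := setIntegral_mono_on g0_int (G_int hs) measurableSet_Ioc
          (fun t ht => G_lower hs ht)
  · calc (∫ t in Set.Ioc (0:ℝ) 1, (t * (1 - t) * (1 - s * t)) ^ (-(1/2 : ℝ)))
        ≤ ∫ t in Set.Ioc (0:ℝ) 1, (1+s) * ((t*(1-t)) ^ (-(1/2):ℝ)) :=
          setIntegral_mono_on (G_int hs) (g0_int.const_mul _) measurableSet_Ioc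
            (fun t ht => G_upper hs ht)
      _ = (1+s) * Real.pi := by rw [integral_const_mul, pi_val]
      _ = Real.pi + Real.pi * s := by ring

lemma part3 :
    Filter.Tendsto
      (fun s : ℝ => ∫ u in Set.Ioo (0:ℝ) s, (u * (s - u) * (1 - u)) ^ (-(1/2 : ℝ)))
      (nhdsWithin 0 (Set.Ioi 0)) (nhds Real.pi) := by
  have hmem : ∀ᶠ s in nhdsWithin (0:ℝ) (Set.Ioi 0), s ∈ Set.Ioc (0:ℝ) (1/2) := by
    have h1 : Set.Iic (1/2:ℝ) ∈ nhds (0:ℝ) := Iic_mem_nhds (by norm_num)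
    filter_upwards [mem_nhdsWithin_of_mem_nhds h1, self_mem_nhdsWithin] with s h2 h3
    exact ⟨h3, h2⟩
  have hupper : Filter.Tendsto (fun s : ℝ => Real.pi + Real.pi * s)
      (nhdsWithin 0 (Set.Ioi 0)) (nhds Real.pi) := by
    have hc : Continuous (fun s : ℝ => Real.pi + Real.pi * s) := by continuity
    have := (hc.tendsto (0:ℝ)).mono_left (nhdsWithin_le_nhds (s := Set.Ioi (0:ℝ)))
    simpa using this
  refine tendsto_of_tendsto_of_tendsto_of_le_of_le' tendsto_const_nhds hupper ?_ ?_
  · filter_upwards [hmem] with s hs using (part2 hs).1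
  · filter_upwards [hmem] with s hs using (part2 hs).2


/-- The substitution t = u/s gives
∫₀^s (u(s−u)(1−u))^{−1/2} du = ∫₀¹ (t(1−t)(1−st))^{−1/2} dt, and there is C ∈ (0,∞)
with π ≤ D(s) ≤ π + C·s for s ∈ (0,1/2]; in particular D(s) → π as s → 0⁺. -/
theorem stmt_10 :
    (∀ s ∈ Set.Ioo (0:ℝ) 1,
      ∫ u in Set.Ioo (0:ℝ) s, (u * (s - u) * (1 - u)) ^ (-(1/2 : ℝ))
        = ∫ t in Set.Ioo (0:ℝ) 1, (t * (1 - t) * (1 - s * t)) ^ (-(1/2 : ℝ))) ∧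
    (∃ C : ℝ, 0 < C ∧ ∀ s ∈ Set.Ioc (0:ℝ) (1/2),
      Real.pi ≤ (∫ u in Set.Ioo (0:ℝ) s, (u * (s - u) * (1 - u)) ^ (-(1/2 : ℝ))) ∧
      (∫ u in Set.Ioo (0:ℝ) s, (u * (s - u) * (1 - u)) ^ (-(1/2 : ℝ)))
        ≤ Real.pi + C * s) ∧
    Filter.Tendsto
      (fun s : ℝ => ∫ u in Set.Ioo (0:ℝ) s, (u * (s - u) * (1 - u)) ^ (-(1/2 : ℝ)))
      (nhdsWithin 0 (Set.Ioi 0)) (nhds Real.pi) :=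
  ⟨fun _ hs => part1 hs, ⟨Real.pi, Real.pi_pos, fun _ hs => part2 hs⟩, part3⟩
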